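/- Let f_1, …, f_n : ℝ → ℝ be continuous functions such that any two distinct functions intersect at most twice (s = 2). Then the lower envelope min_i f_i has at most 2n - 2 breakpoints (λ_2(n) = 2n - 1 pieces). -/

import Mathlib

open List in
/-- First-occurrence split. -/
lemma split_first {α : Type*} [DecidableEq α] {a : α} :
    ∀ {l : List α}, a ∈ l → ∃ s r, l = s ++ a :: r ∧ a ∉ s := by
  intro l hl
  induction l with
  | nil => simp at hl
  | cons b tl ih =>
    by_cases hba : a = b
    · exact ⟨[], tl, by simp [hba], by simp⟩
    · have : a ∈ tl := by
        rcases List.mem_cons.mp hl with h | h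
        · exact absurd h hba
        · exact h
      obtain ⟨s, r, hsr, hns⟩ := ih this
      exact ⟨b :: s, r, by simp [hsr], by simp [hns, hba]⟩

open List in
/-- Davenport–Schinzel order-2 bound for lists. -/
lemma ds2 {α : Type*} [DecidableEq α] :
    ∀ N (l : List α), l.length ≤ N → l ≠ [] → l.Chain' (· ≠ ·) →
    (∀ a b : α, a ≠ b → ¬ [a, b, a, b] <+ l) → l.length ≤ 2 * l.toFinset.card - 1 := by
  intro N
  induction N with
  | zero => intro l hN hne _ _; interval_cases h : l.length; · simp at h; exact absurd h hne
  | succ N ih =>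
    intro l hN hne hchain habab
    obtain ⟨a, tl, rfl⟩ := List.exists_cons_of_ne_nil hne
    by_cases hmem : a ∈ tl
    · obtain ⟨s, r, rfl, hans⟩ := split_first hmem
      -- s is nonempty
      obtain ⟨b, s', rfl⟩ : ∃ b s', s = b :: s' := by
        rcases s with _ | ⟨b, s'⟩
        · exact absurd rfl ((List.isChain_cons.mp hchain).1 a (by simp))
        · exact ⟨b, s', rfl⟩
      set s : List α := b :: s' with hs
      have hchain' : (s ++ a :: r).Chain' (· ≠ ·) := hchain.tail
      have hcs : s.Chain' (· ≠ ·) := (List.isChain_append.mp hchain').1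
      have hcar : (a :: r).Chain' (· ≠ ·) := (List.isChain_append.mp hchain').2.1
      -- disjointness
      have hdisj : ∀ c ∈ s, c ∉ (a :: r) := by
        intro c hc hcar'
        have hca : c ≠ a := fun h => hans (h ▸ hc)
        rcases List.mem_cons.mp hcar' with h | h
        · exact hca h
        · refine habab a c (Ne.symm hca) ?_
          have h1 : [c] <+ s := List.singleton_sublist.mpr hc
          have h2 : [a, c] <+ a :: r :=
            List.Sublist.cons₂ a (List.singleton_sublist.mpr h)
          exact List.Sublist.cons₂ a (h1.append h2)
      have hsubs : s <+ a :: (s ++ a :: r) :=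
        ((List.sublist_append_left s (a :: r)).trans (List.sublist_cons_self _ _))
      have hsubar : (a :: r) <+ a :: (s ++ a :: r) :=
        ((List.sublist_append_right s (a :: r)).trans (List.sublist_cons_self _ _))
      have hNlen : s.length + r.length + 2 ≤ N + 1 := by simp at hN; omega
      have ihs := ih s (by omega) (by simp [hs]) hcs
        (fun x y hxy h => habab x y hxy (h.trans hsubs))
      have ihar := ih (a :: r) (by simp; omega) (by simp) hcar
        (fun x y hxy h => habab x y hxy (h.trans hsubar))
      have hks : 1 ≤ s.toFinset.card := Finset.card_pos.mpr ⟨b, by simp [hs]⟩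
      have hkar : 1 ≤ (a :: r).toFinset.card := Finset.card_pos.mpr ⟨a, by simp⟩
      have hunion : (a :: (s ++ a :: r)).toFinset = s.toFinset ∪ (a :: r).toFinset := by
        ext x; simp [or_assoc]
      have hdisj' : Disjoint s.toFinset (a :: r).toFinset := by
        rw [Finset.disjoint_left]
        intro x hx hx'
        exact hdisj x (by simpa using hx) (by simpa using hx')
      have hcard : (a :: (s ++ a :: r)).toFinset.card
          = s.toFinset.card + (a :: r).toFinset.card := by
        rw [hunion, Finset.card_union_of_disjoint hdisj']
      have hlen : (a :: (s ++ a :: r)).length = s.length + (a :: r).length + 1 := by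
        simp
      omega
    · rcases tl with _ | ⟨c, tl'⟩
      · simp
      · set tl : List α := c :: tl' with htl
        have ihtl := ih tl (by simpa using hN) (by simp [htl]) hchain.tail
          (fun x y hxy h => habab x y hxy (h.trans (List.sublist_cons_self _ _)))
        have hins : (a :: tl).toFinset = insert a tl.toFinset := by simp
        have hcard : (a :: tl).toFinset.card = tl.toFinset.card + 1 := by
          rw [hins, Finset.card_insert_of_notMem (by simpa using hmem)]
        have hktl : 1 ≤ tl.toFinset.card := Finset.card_pos.mpr ⟨c, by simp [htl]⟩
        have : (a :: tl).length = tl.length + 1 := by simp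
        omega

/-- For `n` continuous functions on `ℝ` such that each pair intersects at most
twice, the lower envelope has at most `2n - 1` pieces: any sequence of times `t_0 < ⋯ < t_m`,
at each of which some function is the unique minimizer and where consecutive minimizers
differ, has length `m + 1 ≤ 2n - 1`. -/
theorem stmt11 (n : ℕ) (f : Fin n → ℝ → ℝ)
    (hcont : ∀ i, Continuous (f i))
    (hs : ∀ i j : Fin n, i ≠ j → ∃ S : Finset ℝ,
      {t : ℝ | f i t = f j t} ⊆ ↑S ∧ S.card ≤ 2)
    (m : ℕ) (t : Fin (m + 1) → ℝ) (ht : StrictMono t)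
    (g : Fin (m + 1) → Fin n)
    (hmin : ∀ j, ∀ i, i ≠ g j → f (g j) (t j) < f i (t j))
    (hadj : ∀ j : Fin m, g j.castSucc ≠ g j.succ) :
    m + 1 ≤ 2 * n - 1 := by
  have hn : 0 < n := (g 0).pos
  have hlen : (List.ofFn g).length = m + 1 := List.length_ofFn
  have hchain : (List.ofFn g).Chain' (· ≠ ·) := by
    rw [List.Chain', List.isChain_iff_getElem]
    intro i hi
    have hi' : i < m := by simpa [hlen] using hi
    simp only [List.getElem_ofFn]
    exact hadj ⟨i, hi'⟩
  have habab : ∀ a b : Fin n, a ≠ b → ¬ List.Sublist [a, b, a, b] (List.ofFn g) := by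
    intro a b hab hsub
    rw [List.sublist_iff_exists_fin_orderEmbedding_get_eq] at hsub
    obtain ⟨e, he⟩ := hsub
    set j0 : Fin (m + 1) := Fin.cast hlen (e ⟨0, by norm_num⟩) with hj0
    set j1 : Fin (m + 1) := Fin.cast hlen (e ⟨1, by norm_num⟩) with hj1
    set j2 : Fin (m + 1) := Fin.cast hlen (e ⟨2, by norm_num⟩) with hj2
    set j3 : Fin (m + 1) := Fin.cast hlen (e ⟨3, by norm_num⟩) with hj3
    have hg0 : g j0 = a := by
      have h := he ⟨0, by norm_num⟩
      rw [List.get_ofFn] at h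
      exact h.symm
    have hg1 : g j1 = b := by
      have h := he ⟨1, by norm_num⟩
      rw [List.get_ofFn] at h
      exact h.symm
    have hg2 : g j2 = a := by
      have h := he ⟨2, by norm_num⟩
      rw [List.get_ofFn] at h
      exact h.symm
    have hg3 : g j3 = b := by
      have h := he ⟨3, by norm_num⟩
      rw [List.get_ofFn] at h
      exact h.symm
    have hj01 : j0 < j1 := e.strictMono (Fin.mk_lt_mk.mpr (by norm_num))
    have hj12 : j1 < j2 := e.strictMono (Fin.mk_lt_mk.mpr (by norm_num))
    have hj23 : j2 < j3 := e.strictMono (Fin.mk_lt_mk.mpr (by norm_num))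
    have hA0 : f a (t j0) < f b (t j0) := by
      have := hmin j0 b (by rw [hg0]; exact hab.symm); rwa [hg0] at this
    have hB1 : f b (t j1) < f a (t j1) := by
      have := hmin j1 a (by rw [hg1]; exact hab); rwa [hg1] at this
    have hA2 : f a (t j2) < f b (t j2) := by
      have := hmin j2 b (by rw [hg2]; exact hab.symm); rwa [hg2] at this
    have hB3 : f b (t j3) < f a (t j3) := by
      have := hmin j3 a (by rw [hg3]; exact hab); rwa [hg3] at this
    set F : ℝ → ℝ := fun x => f a x - f b x with hF
    have hFc : Continuous F := (hcont a).sub (hcont b)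
    obtain ⟨x1, hx1mem, hx1eq⟩ :=
      intermediate_value_Ioo (ht hj01).le hFc.continuousOn
        (show (0 : ℝ) ∈ Set.Ioo (F (t j0)) (F (t j1)) from
          ⟨sub_neg.mpr hA0, sub_pos.mpr hB1⟩)
    obtain ⟨x2, hx2mem, hx2eq⟩ :=
      intermediate_value_Ioo' (ht hj12).le hFc.continuousOn
        (show (0 : ℝ) ∈ Set.Ioo (F (t j2)) (F (t j1)) from
          ⟨sub_neg.mpr hA2, sub_pos.mpr hB1⟩)
    obtain ⟨x3, hx3mem, hx3eq⟩ :=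
      intermediate_value_Ioo (ht hj23).le hFc.continuousOn
        (show (0 : ℝ) ∈ Set.Ioo (F (t j2)) (F (t j3)) from
          ⟨sub_neg.mpr hA2, sub_pos.mpr hB3⟩)
    obtain ⟨S, hSsub, hScard⟩ := hs a b hab
    have hm1 : x1 ∈ S := hSsub (sub_eq_zero.mp hx1eq)
    have hm2 : x2 ∈ S := hSsub (sub_eq_zero.mp hx2eq)
    have hm3 : x3 ∈ S := hSsub (sub_eq_zero.mp hx3eq)
    have h12 : x1 < x2 := lt_trans hx1mem.2 hx2mem.1
    have h23 : x2 < x3 := lt_trans hx2mem.2 hx3mem.1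
    have hsub3 : ({x1, x2, x3} : Finset ℝ) ⊆ S := by
      intro y hy
      simp only [Finset.mem_insert, Finset.mem_singleton] at hy
      rcases hy with rfl | rfl | rfl <;> assumption
    have hc3 : ({x1, x2, x3} : Finset ℝ).card = 3 := by
      rw [Finset.card_insert_of_notMem (by simp; constructor <;> intro h <;> nlinarith),
        Finset.card_insert_of_notMem (by simp; intro h; nlinarith),
        Finset.card_singleton]
    have := Finset.card_le_card hsub3
    omega
  have key := ds2 (m + 1) (List.ofFn g) (by simp) (by simp) hchain habab
  have hcardle : (List.ofFn g).toFinset.card ≤ n :=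
    le_trans (Finset.card_le_univ _) (by simp)
  simp only [hlen] at key
  omega
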